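/- Fix ε > 0 and γ > 0. (a) If C ≥ 0 is such that for every n ∈ ℕ and all independent random variables X_1,…,X_n with E X_k = 0, E X_k² < ∞ and B_n² = Σ_k E X_k² > 0 one has Δ_n ≤ C·sup_{0<z<ε} (max{z,1}/z)·( γ·|M_n(z)| + z·L_n(z) ), then C ≥ Φ(1) − 1/2 > 0.3413. (b) The same conclusion C ≥ Φ(1) − 1/2 holds if instead Δ_n ≤ C·( γ·(max{ε,1}/ε)·|M_n(ε)| + sup_{0<z<ε} max{z,1}·L_n(z) ) for all such n and X_1,…,X_n. -/

import Mathlib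

open MeasureTheory ProbabilityTheory Real Set
open scoped ENNReal

/-- The standard normal distribution function. -/
noncomputable def Phi (x : ℝ) : ℝ :=
  ∫ t in Set.Iic x, Real.exp (-t ^ 2 / 2) / Real.sqrt (2 * Real.pi)

/-- `B_n = sqrt (Σ E X_k²)`. -/
noncomputable def Bn {Ω : Type} [MeasurableSpace Ω] (μ : Measure Ω) {n : ℕ}
    (X : Fin n → Ω → ℝ) : ℝ :=
  Real.sqrt (∑ k, ∫ ω, (X k ω) ^ 2 ∂μ)

/-- Uniform distance between the d.f. of the normalized sum and the standard normal d.f. -/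
noncomputable def Deltan {Ω : Type} [MeasurableSpace Ω] (μ : Measure Ω) {n : ℕ}
    (X : Fin n → Ω → ℝ) : ℝ :=
  ⨆ x : ℝ, |(μ {ω | (∑ k, X k ω) / Bn μ X < x}).toReal - Phi x|

/-- `M_n(z) = B_n⁻³ Σ E[X_k³ 1_{|X_k| < z B_n}]`. -/
noncomputable def Mn {Ω : Type} [MeasurableSpace Ω] (μ : Measure Ω) {n : ℕ}
    (X : Fin n → Ω → ℝ) (z : ℝ) : ℝ :=
  (∑ k, ∫ ω, (if |X k ω| < z * Bn μ X then (X k ω) ^ 3 else 0) ∂μ) / (Bn μ X) ^ 3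

/-- `L_n(z) = B_n⁻² Σ E[X_k² 1_{|X_k| ≥ z B_n}]` (the Lindeberg fraction). -/
noncomputable def Lnn {Ω : Type} [MeasurableSpace Ω] (μ : Measure Ω) {n : ℕ}
    (X : Fin n → Ω → ℝ) (z : ℝ) : ℝ :=
  (∑ k, ∫ ω, (if z * Bn μ X ≤ |X k ω| then (X k ω) ^ 2 else 0) ∂μ) / (Bn μ X) ^ 2

/-- Hypotheses on the independent summands: measurability, independence, zero means,
finite second moments, positive total variance. -/
def GoodFamily {Ω : Type} [MeasurableSpace Ω] (μ : Measure Ω) {n : ℕ}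
    (X : Fin n → Ω → ℝ) : Prop :=
  (∀ k, Measurable (X k)) ∧
  iIndepFun X μ ∧
  (∀ k, Integrable (fun ω => (X k ω) ^ 2) μ) ∧
  (∀ k, ∫ ω, X k ω ∂μ = 0) ∧
  0 < ∑ k, ∫ ω, (X k ω) ^ 2 ∂μ

/-! ### Analytic facts about the Gaussian -/

lemma intG : Integrable (fun t : ℝ => Real.exp (-t ^ 2 / 2)) := by
  have h := integrable_exp_neg_mul_sq (by norm_num : (0:ℝ) < 1/2)
  convert h using 2 with t
  ring_nf

lemma intG_total : ∫ t : ℝ, Real.exp (-t ^ 2 / 2) = Real.sqrt (2 * Real.pi) := by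
  have h := integral_gaussian (1/2)
  rw [show π / (1/2) = 2 * π by ring] at h
  rw [← h]
  congr 1 with t
  ring_nf

lemma intG_Iic_zero : ∫ t in Iic (0:ℝ), Real.exp (-t ^ 2 / 2) = Real.sqrt (2 * Real.pi) / 2 := by
  have heven : ∫ t in Iic (0:ℝ), Real.exp (-t ^ 2 / 2) = ∫ t in Ici (0:ℝ), Real.exp (-t ^ 2 / 2) := by
    rw [MeasureTheory.integral_Ici_eq_integral_Ioi, show Ioi (0:ℝ) = Ioi (-0) by norm_num,
      ← integral_comp_neg_Iic 0 (fun t => Real.exp (-t ^ 2 / 2))]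
    norm_num
  have hsplit := intervalIntegral.integral_Iic_add_Ioi (b := (0:ℝ))
    (intG.integrableOn) (intG.integrableOn)
  rw [intG_total] at hsplit
  rw [MeasureTheory.integral_Ici_eq_integral_Ioi] at heven
  linarith

noncomputable def lpoly (t : ℝ) : ℝ :=
  1 - t^2/2 + t^4/8 - t^6/48 + t^8/384 - t^10/3840 - 7*t^12/276480

lemma lpoly_cont : Continuous lpoly := by unfold lpoly; continuity

lemma lpoly_int : ∫ t in (0:ℝ)..1, lpoly t = 1 - 1/6 + 1/40 - 1/336 + 1/3456 - 1/42240 - 7/3594240 := by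
  have hF : ∀ t ∈ Set.uIcc (0:ℝ) 1, HasDerivAt
      (fun t : ℝ => t - t^3/6 + t^5/40 - t^7/336 + t^9/3456 - t^11/42240 - 7*t^13/3594240)
      (lpoly t) t := by
    intro t _
    have h := ((((((hasDerivAt_id t).sub ((hasDerivAt_pow 3 t).div_const 6)).add
      ((hasDerivAt_pow 5 t).div_const 40)).sub ((hasDerivAt_pow 7 t).div_const 336)).add
      ((hasDerivAt_pow 9 t).div_const 3456)).sub ((hasDerivAt_pow 11 t).div_const 42240)).sub
      (((hasDerivAt_pow 13 t).const_mul 7).div_const 3594240)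
    refine h.congr_deriv ?_
    unfold lpoly
    push_cast
    ring
  rw [intervalIntegral.integral_eq_sub_of_hasDerivAt hF
    (lpoly_cont.intervalIntegrable 0 1)]
  norm_num

lemma lpoly_le (t : ℝ) (h0 : 0 ≤ t) (h1 : t ≤ 1) : lpoly t ≤ Real.exp (-t^2/2) := by
  have hx : |(-(t^2/2) : ℝ)| ≤ 1 := by rw [abs_neg, abs_of_nonneg (by positivity)]; nlinarith
  have h := Real.exp_bound hx (n := 6) (by norm_num)
  have h2 := (abs_le.mp h).1
  have hs : ∑ i ∈ Finset.range 6, (-(t^2/2))^i / (i.factorial : ℝ)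
      = 1 - t^2/2 + t^4/8 - t^6/48 + t^8/384 - t^10/3840 := by
    simp [Finset.sum_range_succ, Nat.factorial]
    ring
  rw [hs] at h2
  have habs2 : |(-(t^2/2) : ℝ)|^6 = (t^2/2)^6 := by
    rw [abs_neg, abs_of_nonneg (by positivity)]
  rw [habs2] at h2
  norm_num [Nat.factorial] at h2
  unfold lpoly
  rw [show (-t^2/2 : ℝ) = -(t^2/2) by ring]
  nlinarith [h2]

lemma lowint : (0.8556208 : ℝ) ≤ ∫ t in (0:ℝ)..1, Real.exp (-t^2/2) := by
  have h := intervalIntegral.integral_mono_on (μ := volume) (by norm_num : (0:ℝ) ≤ 1)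
    (lpoly_cont.intervalIntegrable 0 1)
    ((by continuity : Continuous fun t : ℝ => Real.exp (-t^2/2)).intervalIntegrable 0 1)
    (fun t ht => lpoly_le t ht.1 ht.2)
  rw [lpoly_int] at h
  norm_num at h ⊢
  linarith

lemma sqrt2pi_pos : 0 < Real.sqrt (2 * Real.pi) := Real.sqrt_pos.mpr (by positivity)

lemma sqrt2pi_lt : Real.sqrt (2 * Real.pi) < 2.50663 := by
  rw [show (2.50663:ℝ) = Real.sqrt (2.50663^2) by
    rw [Real.sqrt_sq (by norm_num)]]
  apply Real.sqrt_lt_sqrt (by positivity)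
  nlinarith [Real.pi_lt_d6]

lemma Phi_eq (x : ℝ) : Phi x = (∫ t in Iic x, Real.exp (-t ^ 2 / 2)) / Real.sqrt (2 * Real.pi) :=
  integral_div _ _

lemma Phi_nonneg (x : ℝ) : 0 ≤ Phi x := by
  rw [Phi_eq]
  apply div_nonneg _ sqrt2pi_pos.le
  apply integral_nonneg
  intro t; positivity

lemma Phi_le_one (x : ℝ) : Phi x ≤ 1 := by
  rw [Phi_eq, div_le_one sqrt2pi_pos, ← intG_total]
  apply setIntegral_le_integral intG
  filter_upwards with t using by positivity

lemma Phi_one_key : (0.3413 : ℝ) < Phi 1 - 1/2 := by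
  have hsub := intervalIntegral.integral_Iic_sub_Iic (f := fun t : ℝ => Real.exp (-t^2/2))
    (μ := volume) (a := 0) (b := 1) intG.integrableOn intG.integrableOn
  rw [intG_Iic_zero] at hsub
  have hIic1 : ∫ t in Iic (1:ℝ), Real.exp (-t ^ 2 / 2)
      = Real.sqrt (2 * Real.pi) / 2 + ∫ t in (0:ℝ)..1, Real.exp (-t^2/2) := by linarith
  rw [Phi_eq, hIic1]
  have h1 := lowint
  have h2 := sqrt2pi_lt
  have h3 := sqrt2pi_pos
  have hhalf : Real.sqrt (2 * Real.pi) / 2 / Real.sqrt (2 * Real.pi) = 1/2 := by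
    field_simp
  rw [add_div, hhalf]
  have : (0.8556208 : ℝ) / (2.50663) ≤ (∫ t in (0:ℝ)..1, Real.exp (-t^2/2)) / Real.sqrt (2 * Real.pi) := by
    apply div_le_div₀ (by linarith) h1 h3 h2.le
  nlinarith [this]

/-! ### The witness: a symmetric Bernoulli variable -/

noncomputable def bmu : Measure Bool :=
  (2⁻¹ : ℝ≥0∞) • Measure.dirac true + (2⁻¹ : ℝ≥0∞) • Measure.dirac false

instance : IsProbabilityMeasure bmu := by
  constructor
  simp [bmu]
  rw [← two_mul, ENNReal.mul_inv_cancel] <;> norm_num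

instance (b : Bool) : IsFiniteMeasure ((2⁻¹ : ℝ≥0∞) • Measure.dirac b) := by
  constructor
  simp [Measure.smul_apply]

lemma bmu_int (f : Bool → ℝ) : ∫ b, f b ∂bmu = (f true + f false) / 2 := by
  rw [bmu, integral_add_measure (Integrable.of_finite) (Integrable.of_finite),
    integral_smul_measure, integral_smul_measure, integral_dirac, integral_dirac]
  simp
  ring

lemma bmu_apply (s : Set Bool) :
    bmu s = 2⁻¹ * s.indicator 1 true + 2⁻¹ * s.indicator 1 false := by
  rw [bmu, Measure.add_apply, Measure.smul_apply, Measure.smul_apply,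
    Measure.dirac_apply, Measure.dirac_apply]
  simp [smul_eq_mul]

def bX : Fin 1 → Bool → ℝ := fun _ b => if b then 1 else -1

lemma bB : Bn bmu bX = 1 := by
  rw [Bn, Fin.sum_univ_one, bmu_int]
  norm_num [bX]

lemma good : GoodFamily bmu bX := by
  refine ⟨fun k => Measurable.of_discrete, (iIndepFun.of_subsingleton (μ := bmu)), fun k => Integrable.of_finite,
    fun k => ?_, ?_⟩
  · rw [bmu_int]; norm_num [bX]
  · rw [Fin.sum_univ_one, bmu_int]; norm_num [bX]

lemma bMn (z : ℝ) : Mn bmu bX z = 0 := by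
  rw [Mn, bB, Fin.sum_univ_one, bmu_int]
  norm_num [bX]
  split_ifs <;> norm_num

lemma bLnn (z : ℝ) : Lnn bmu bX z = if z ≤ 1 then 1 else 0 := by
  rw [Lnn, bB, Fin.sum_univ_one, bmu_int]
  norm_num [bX]

lemma toReal_le_one (s : Set Bool) : (bmu s).toReal ≤ 1 := by
  have h : bmu s ≤ 1 := prob_le_one
  have := ENNReal.toReal_mono (by simp) h
  simpa using this

lemma bDelta : Phi 1 - 1/2 ≤ Deltan bmu bX := by
  have hbdd : BddAbove (Set.range fun x : ℝ =>
      |(bmu {ω | (∑ k, bX k ω) / Bn bmu bX < x}).toReal - Phi x|) := by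
    refine ⟨1, ?_⟩
    rintro y ⟨x, rfl⟩
    have h1 := toReal_le_one {ω | (∑ k, bX k ω) / Bn bmu bX < x}
    have h2 := Phi_nonneg x
    have h3 := Phi_le_one x
    have h4 : (0:ℝ) ≤ (bmu {ω | (∑ k, bX k ω) / Bn bmu bX < x}).toReal := ENNReal.toReal_nonneg
    rw [abs_le]
    constructor <;> linarith
  have hle := le_ciSup hbdd 1
  refine le_trans ?_ hle
  have hset : {ω : Bool | (∑ k, bX k ω) / Bn bmu bX < 1} = {false} := by
    ext b
    cases b <;> simp [Fin.sum_univ_one, bX, bB]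
  rw [hset, bmu_apply]
  have hPhi : 1/2 ≤ Phi 1 := by have := Phi_one_key; linarith
  norm_num
  rw [abs_of_nonpos (by linarith)]
  linarith

theorem lower_bound_optimistic_constants (ε γ : ℝ) (hε : 0 < ε) (hγ : 0 < γ) :
    (∀ C : ℝ, 0 ≤ C →
      (∀ (Ω : Type) (mΩ : MeasurableSpace Ω) (μ : Measure Ω), IsProbabilityMeasure μ →
        ∀ (n : ℕ) (X : Fin n → Ω → ℝ), GoodFamily μ X →
          Deltan μ X ≤
            C * sSup ((fun z => max z 1 / z * (γ * |Mn μ X z| + z * Lnn μ X z)) ''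
              Set.Ioo (0 : ℝ) ε)) →
      Phi 1 - 1/2 ≤ C) ∧
    (∀ C : ℝ, 0 ≤ C →
      (∀ (Ω : Type) (mΩ : MeasurableSpace Ω) (μ : Measure Ω), IsProbabilityMeasure μ →
        ∀ (n : ℕ) (X : Fin n → Ω → ℝ), GoodFamily μ X →
          Deltan μ X ≤
            C * (γ * (max ε 1 / ε) * |Mn μ X ε| +
              sSup ((fun z => max z 1 * Lnn μ X z) '' Set.Ioo (0 : ℝ) ε))) →
      Phi 1 - 1/2 ≤ C) ∧
    0.3413 < Phi 1 - 1/2 := by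
  refine ⟨?_, ?_, Phi_one_key⟩
  · intro C hC hbound
    have h := hbound Bool inferInstance bmu inferInstance 1 bX good
    have hsup : sSup ((fun z => max z 1 / z * (γ * |Mn bmu bX z| + z * Lnn bmu bX z)) ''
        Set.Ioo (0 : ℝ) ε) ≤ 1 := by
      apply csSup_le ((Set.nonempty_Ioo.mpr hε).image _)
      rintro y ⟨z, hz, rfl⟩
      dsimp only
      rw [bMn, bLnn]
      rcases le_or_gt z 1 with h1 | h1
      · rw [if_pos h1, max_eq_right h1]
        rw [abs_zero]
        rw [mul_zero, zero_add, mul_one, one_div, inv_mul_cancel₀ (ne_of_gt hz.1)]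
      · rw [if_neg (not_le.mpr h1)]
        simp
    calc Phi 1 - 1/2 ≤ Deltan bmu bX := bDelta
      _ ≤ C * _ := h
      _ ≤ C * 1 := mul_le_mul_of_nonneg_left hsup hC
      _ = C := mul_one C
  · intro C hC hbound
    have h := hbound Bool inferInstance bmu inferInstance 1 bX good
    have hsup : sSup ((fun z => max z 1 * Lnn bmu bX z) '' Set.Ioo (0 : ℝ) ε) ≤ 1 := by
      apply csSup_le ((Set.nonempty_Ioo.mpr hε).image _)
      rintro y ⟨z, hz, rfl⟩
      dsimp only
      rw [bLnn]
      rcases le_or_gt z 1 with h1 | h1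
      · rw [if_pos h1, max_eq_right h1]; norm_num
      · rw [if_neg (not_le.mpr h1)]; simp
    rw [bMn] at h
    simp only [abs_zero, mul_zero, zero_add] at h
    calc Phi 1 - 1/2 ≤ Deltan bmu bX := bDelta
      _ ≤ C * _ := h
      _ ≤ C * 1 := mul_le_mul_of_nonneg_left hsup hC
      _ = C := mul_one C
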